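/- Let {a,b} and {ã,b̃} be nondegenerate pairs in L^∞(T). If ker S_{a,b} ∩ ker S_{ã,b̃} ≠ {0}, then ker S_{a,b} = ker S_{ã,b̃}. -/

import Mathlib

open MeasureTheory Complex Real AddCircle
open scoped ENNReal ComplexConjugate

noncomputable section

instance : Fact (0 < 2 * π) := ⟨by positivity⟩

/-- Normalized Haar (Lebesgue) measure on the unit circle, realized as `AddCircle (2π)`. -/
abbrev μT : Measure (AddCircle (2 * π)) := AddCircle.haarAddCircle

/-- The Lebesgue space `L²(𝕋)`. -/
abbrev L2 : Type := Lp ℂ 2 μT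

/-- The space `L^∞(𝕋)`. -/
abbrev Linf : Type := Lp ℂ ∞ μT

/-- Multiplication of an `L²` function by an `L^∞` function, as an element of `L²`. -/
def mul2 (a : Linf) (f : L2) : L2 :=
  ((Lp.memLp f).smul (p := ∞) (Lp.memLp a)).toLp ((a : AddCircle (2 * π) → ℂ) • (f : AddCircle (2 * π) → ℂ))

lemma mul2_coe (a : Linf) (f : L2) :
    (mul2 a f : AddCircle (2 * π) → ℂ) =ᵐ[μT] fun x => a x * f x :=
  (MemLp.coeFn_toLp _)

/-- Multiplication in `L^∞`. -/
def mulInf (a b : Linf) : Linf :=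
  ((Lp.memLp b).smul (p := ∞) (Lp.memLp a)).toLp ((a : AddCircle (2 * π) → ℂ) • (b : AddCircle (2 * π) → ℂ))

lemma mulInf_coe (a b : Linf) :
    (mulInf a b : AddCircle (2 * π) → ℂ) =ᵐ[μT] fun x => a x * b x :=
  (MemLp.coeFn_toLp _)

/-- Complex conjugation on `Lp`. -/
def conjLp {p : ℝ≥0∞} [Fact (1 ≤ p)] (f : Lp ℂ p μT) : Lp ℂ p μT :=
  MemLp.toLp (fun x => conj (f x))
    ⟨continuous_star.comp_aestronglyMeasurable (Lp.aestronglyMeasurable f),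
      by
        rw [eLpNorm_congr_norm_ae (g := (f : AddCircle (2 * π) → ℂ))
          (Filter.Eventually.of_forall fun x => by simp)]
        exact (Lp.memLp f).2⟩

lemma conjLp_coe {p : ℝ≥0∞} [Fact (1 ≤ p)] (f : Lp ℂ p μT) :
    (conjLp f : AddCircle (2 * π) → ℂ) =ᵐ[μT] fun x => conj (f x) :=
  (MemLp.coeFn_toLp _)

/-- The Hardy space `H²`, as the subspace of `L²(𝕋)` of functions whose negative Fourier
coefficients vanish. -/
def Hardy : Submodule ℂ L2 where
  carrier := {f | ∀ n : ℤ, n < 0 → fourierBasis.repr f n = 0}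
  add_mem' := fun hf hg n hn => by simp [hf n hn, hg n hn]
  zero_mem' := fun n hn => by simp
  smul_mem' := fun c f hf n hn => by simp [hf n hn]

lemma hardy_isClosed : IsClosed (Hardy : Set L2) := by
  have h : (Hardy : Set L2)
      = ⋂ n : ℤ, ⋂ _ : n < 0, {f : L2 | fourierBasis.repr f n = 0} := by
    ext f
    simp [Hardy, Set.mem_iInter]
  rw [h]
  refine isClosed_iInter fun n => isClosed_iInter fun hn => ?_
  have hc : Continuous fun f : L2 => fourierBasis.repr f n := by
    have : (fun f : L2 => fourierBasis.repr f n)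
        = fun f : L2 => (innerSL ℂ (fourierBasis n : L2)) f := by
      ext f
      rw [HilbertBasis.repr_apply_apply]
      rfl
    rw [this]
    exact (innerSL ℂ (fourierBasis n : L2)).continuous
  exact isClosed_eq hc continuous_const

instance : CompleteSpace Hardy := hardy_isClosed.completeSpace_coe

/-- The Riesz projection `P⁺ : L² → L²`, i.e. the orthogonal projection onto `H²`. -/
def Pplus : L2 →L[ℂ] L2 := Hardy.subtypeL.comp Hardy.orthogonalProjectionOnto

/-- The complementary projection `P⁻ = I - P⁺`. -/
def Pminus : L2 →L[ℂ] L2 := ContinuousLinearMap.id ℂ L2 - Pplus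

lemma mul2_norm_le (a : Linf) (f : L2) : ‖mul2 a f‖ ≤ ‖a‖ * ‖f‖ := by
  rw [mul2, Lp.norm_toLp]
  have h := eLpNorm_smul_le_eLpNorm_top_mul_eLpNorm 2
    (Lp.aestronglyMeasurable f) (φ := (a : AddCircle (2 * π) → ℂ))
  refine le_trans (ENNReal.toReal_mono ?_ h) ?_
  · exact ENNReal.mul_ne_top (Lp.memLp a).2.ne (Lp.memLp f).2.ne
  · rw [ENNReal.toReal_mul, Lp.norm_def, Lp.norm_def]

/-- Multiplication by an `L^∞` function `a`, as a bounded operator `M_a` on `L²`. -/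
def Mult (a : Linf) : L2 →L[ℂ] L2 :=
  LinearMap.mkContinuous
    { toFun := mul2 a
      map_add' := fun f g => by
        refine Lp.ext ?_
        filter_upwards [mul2_coe a (f + g), mul2_coe a f, mul2_coe a g,
          Lp.coeFn_add f g, Lp.coeFn_add (mul2 a f) (mul2 a g)] with x h1 h2 h3 h4 h5
        simp only [h1, h5, Pi.add_apply, h2, h3, h4, mul_add]
      map_smul' := fun c f => by
        refine Lp.ext ?_
        filter_upwards [mul2_coe a (c • f), mul2_coe a f,
          Lp.coeFn_smul c f, Lp.coeFn_smul c (mul2 a f)] with x h1 h2 h3 h4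
        simp only [h1, h4, Pi.smul_apply, h2, h3, smul_eq_mul, RingHom.id_apply]
        ring }
    ‖a‖ (fun f => mul2_norm_le a f)

/-- The paired operator `S_{a,b} = a P⁺ + b P⁻` on `L²(𝕋)`. -/
def pairedS (a b : Linf) : L2 →L[ℂ] L2 :=
  (Mult a).comp Pplus + (Mult b).comp Pminus

/-- The transposed paired operator `Σ_{a,b} = P⁺ a + P⁻ b` on `L²(𝕋)`. -/
def pairedSigma (a b : Linf) : L2 →L[ℂ] L2 :=
  Pplus.comp (Mult a) + Pminus.comp (Mult b)

/-- Membership in `H^∞`: an `L^∞` function whose negative Fourier coefficients vanish. -/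
def MemHinf (a : Linf) : Prop := ∀ n : ℤ, n < 0 → fourierCoeff (a : AddCircle (2 * π) → ℂ) n = 0

/-- A pair `{a,b}` is nondegenerate if `a`, `b` and `a - b` are all nonzero a.e. on `𝕋`. -/
def Nondegenerate (a b : Linf) : Prop :=
  (∀ᵐ x ∂μT, a x ≠ 0) ∧ (∀ᵐ x ∂μT, b x ≠ 0) ∧ (∀ᵐ x ∂μT, a x - b x ≠ 0)



/-! ### Auxiliary lemmas -/

section Aux

lemma Mult_apply (a : Linf) (f : L2) : Mult a f = mul2 a f := rfl

lemma Mult_coe (a : Linf) (f : L2) :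
    (Mult a f : AddCircle (2 * π) → ℂ) =ᵐ[μT] fun x => a x * f x := mul2_coe a f

lemma repr_eq_fourierCoeff (f : L2) (n : ℤ) :
    fourierBasis.repr f n = fourierCoeff (f : AddCircle (2 * π) → ℂ) n :=
  fourierBasis_repr f n

lemma fourierCoeff_congr_ae' {f g : AddCircle (2 * π) → ℂ} (h : f =ᵐ[μT] g) (n : ℤ) :
    fourierCoeff f n = fourierCoeff g n := by
  unfold fourierCoeff
  refine integral_congr_ae ?_
  filter_upwards [h] with x hx
  rw [hx]

lemma norm_fourier_apply (n : ℤ) (x : AddCircle (2 * π)) : ‖fourier n x‖ = 1 := by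
  rw [fourier_apply]; exact Circle.norm_coe _

/-- Multiplication by `fourier 1`, as an element of `L^∞`. -/
def fone : Linf :=
  (memLp_top_of_bound ((fourier 1).continuous.aestronglyMeasurable) 1
    (Filter.Eventually.of_forall fun x => le_of_eq (norm_fourier_apply 1 x))).toLp _

lemma fone_coe : (fone : AddCircle (2 * π) → ℂ) =ᵐ[μT] ⇑(fourier 1) := MemLp.coeFn_toLp _

/-- The shift operator (multiplication by `e^{iθ}`). -/
def SOp : L2 →L[ℂ] L2 := Mult fone

lemma SOp_coe (h : L2) :
    (SOp h : AddCircle (2 * π) → ℂ) =ᵐ[μT] fun x => fourier 1 x * h x := by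
  unfold SOp
  filter_upwards [Mult_coe fone h, fone_coe] with x h1 h2
  rw [h1, h2]

lemma repr_SOp (h : L2) (m : ℤ) :
    fourierBasis.repr (SOp h) m = fourierBasis.repr h (m - 1) := by
  rw [repr_eq_fourierCoeff, repr_eq_fourierCoeff,
    fourierCoeff_congr_ae' (SOp_coe h) m]
  unfold fourierCoeff
  refine integral_congr_ae (Filter.Eventually.of_forall fun x => ?_)
  simp only [smul_eq_mul]
  rw [← mul_assoc, ← fourier_add]
  have e : -m + 1 = -(m - 1) := by ring
  rw [e]

lemma SOp_pow_coe (k : ℕ) (h : L2) :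
    ((SOp ^ k) h : AddCircle (2 * π) → ℂ) =ᵐ[μT] fun x => fourier (k : ℤ) x * h x := by
  induction k with
  | zero =>
    have h0 : (SOp ^ 0) h = h := by simp
    rw [h0]
    refine Filter.Eventually.of_forall fun x => ?_
    simp [fourier_zero]
  | succ k ih =>
    have h1 : (SOp ^ (k + 1)) h = SOp ((SOp ^ k) h) := by
      rw [pow_succ']; rfl
    rw [h1]
    filter_upwards [SOp_coe ((SOp ^ k) h), ih] with x hx1 hx2
    rw [hx1, hx2, ← mul_assoc, ← fourier_add]
    have e : (1 : ℤ) + (k : ℤ) = ((k + 1 : ℕ) : ℤ) := by push_cast; ring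
    rw [e]

end Aux

section Proj

lemma fourierBasis_mem_hardy {n : ℤ} (hn : 0 ≤ n) : (fourierBasis n : L2) ∈ Hardy := by
  intro m hm
  have h : fourierBasis.repr ((fourierBasis n : L2)) = lp.single 2 n 1 :=
    (fourierBasis (T := 2 * π)).repr_self n
  rw [h, lp.single_apply]
  rw [Pi.single_apply, if_neg (by omega)]

lemma Pplus_apply_eq_proj (f : L2) : Pplus f = (Hardy.orthogonalProjectionOnto f : L2) := rfl

lemma Pplus_mem_hardy (f : L2) : Pplus f ∈ Hardy := by
  rw [Pplus_apply_eq_proj]; exact (Hardy.orthogonalProjectionOnto f).2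

lemma repr_Pplus (f : L2) (n : ℤ) :
    fourierBasis.repr (Pplus f) n = if 0 ≤ n then fourierBasis.repr f n else 0 := by
  by_cases hn : 0 ≤ n
  · rw [if_pos hn]
    have hperp : f - Pplus f ∈ Hardyᗮ := Hardy.sub_starProjection_mem_orthogonal f
    have hzero : fourierBasis.repr (f - Pplus f) n = 0 := by
      rw [HilbertBasis.repr_apply_apply]
      exact (Submodule.mem_orthogonal Hardy _).1 hperp _ (fourierBasis_mem_hardy hn)
    have hsub : fourierBasis.repr (f - Pplus f) n
        = fourierBasis.repr f n - fourierBasis.repr (Pplus f) n := by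
      rw [map_sub, lp.coeFn_sub, Pi.sub_apply]
    rw [hsub] at hzero
    linear_combination -hzero
  · rw [if_neg hn]
    exact Pplus_mem_hardy f n (by omega)

lemma Pminus_apply (f : L2) : Pminus f = f - Pplus f := rfl

lemma repr_Pminus (f : L2) (n : ℤ) :
    fourierBasis.repr (Pminus f) n = if n < 0 then fourierBasis.repr f n else 0 := by
  have hsub : fourierBasis.repr (f - Pplus f) n
      = fourierBasis.repr f n - fourierBasis.repr (Pplus f) n := by
    rw [map_sub, lp.coeFn_sub, Pi.sub_apply]
  rw [Pminus_apply, hsub, repr_Pplus]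
  by_cases hn : 0 ≤ n
  · rw [if_pos hn, if_neg (by omega)]; ring
  · rw [if_neg hn, if_pos (by omega)]; ring

lemma eq_zero_of_repr_eq_zero {f : L2} (h : ∀ n : ℤ, fourierBasis.repr f n = 0) : f = 0 := by
  have h2 : fourierBasis.repr f = 0 := by
    apply lp.ext
    funext n
    simpa using h n
  simpa using congrArg (fourierBasis (T := 2 * π)).repr.symm h2

end Proj

section Uniqueness

/-- Functions whose Fourier coefficients below `N` vanish. -/
def Hge (N : ℤ) : Submodule ℂ L2 where
  carrier := {f | ∀ n : ℤ, n < N → fourierBasis.repr f n = 0}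
  add_mem' := fun hf hg n hn => by simp [hf n hn, hg n hn]
  zero_mem' := fun n hn => by simp
  smul_mem' := fun c f hf n hn => by simp [hf n hn]

lemma hge_isClosed (N : ℤ) : IsClosed (Hge N : Set L2) := by
  have h : (Hge N : Set L2)
      = ⋂ n : ℤ, ⋂ _ : n < N, {f : L2 | fourierBasis.repr f n = 0} := by
    ext f
    simp [Hge, Set.mem_iInter]
  rw [h]
  refine isClosed_iInter fun n => isClosed_iInter fun hn => ?_
  have hc : Continuous fun f : L2 => fourierBasis.repr f n := by
    have : (fun f : L2 => fourierBasis.repr f n)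
        = fun f : L2 => (innerSL ℂ (fourierBasis n : L2)) f := by
      ext f
      rw [HilbertBasis.repr_apply_apply]
      rfl
    rw [this]
    exact (innerSL ℂ (fourierBasis n : L2)).continuous
  exact isClosed_eq hc continuous_const

lemma integrable_of_bound {G : Type*} [NormedAddCommGroup G]
    (h : AddCircle (2 * π) → G) (hm : AEStronglyMeasurable h μT)
    (C : ℝ) (hb : ∀ x, ‖h x‖ ≤ C) : Integrable h μT :=
  (memLp_top_of_bound hm C (Filter.Eventually.of_forall hb)).integrable le_top

end Uniqueness

section NormSq

lemma integrable_normSq (φ : L2) :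
    Integrable (fun x => normSq ((φ : AddCircle (2 * π) → ℂ) x)) μT := by
  have h := (L2.integrable_inner (𝕜 := ℂ) φ φ).re
  refine h.congr (Filter.Eventually.of_forall fun x => ?_)
  dsimp only
  rw [RCLike.inner_apply, mul_comm, ← normSq_eq_conj_mul_self]
  simp

lemma integral_normSq (φ : L2) :
    ∫ x, normSq ((φ : AddCircle (2 * π) → ℂ) x) ∂μT = ‖φ‖ ^ 2 := by
  have h1 := L2.inner_def (𝕜 := ℂ) φ φ
  have h2 : (inner ℂ φ φ : ℂ) = ((‖φ‖ : ℂ)) ^ 2 := inner_self_eq_norm_sq_to_K φ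
  have h3 : ∫ a, (inner ℂ ((φ : AddCircle (2 * π) → ℂ) a) (φ a) : ℂ) ∂μT
      = ∫ a, ((normSq ((φ : AddCircle (2 * π) → ℂ) a) : ℝ) : ℂ) ∂μT := by
    refine integral_congr_ae (Filter.Eventually.of_forall fun x => ?_)
    dsimp only
    rw [RCLike.inner_apply, mul_comm, ← normSq_eq_conj_mul_self]
  have h5 : ∫ a, ((normSq ((φ : AddCircle (2 * π) → ℂ) a) : ℝ) : ℂ) ∂μT
      = ((∫ a, normSq ((φ : AddCircle (2 * π) → ℂ) a) ∂μT : ℝ) : ℂ) := integral_ofReal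
  have h4 : ((∫ a, normSq ((φ : AddCircle (2 * π) → ℂ) a) ∂μT : ℝ) : ℂ)
      = ((‖φ‖ ^ 2 : ℝ) : ℂ) := by
    rw [← h5, ← h3, ← h1, h2]
    push_cast
    ring
  exact_mod_cast h4

lemma integral_fourier_mul_normSq_eq_zero (φ : L2)
    (horth : ∀ k : ℕ, 1 ≤ k → (inner ℂ ((SOp ^ k) φ) φ : ℂ) = 0) :
    ∀ n : ℤ, n ≠ 0 →
      ∫ x, fourier n x * ((normSq ((φ : AddCircle (2 * π) → ℂ) x) : ℝ) : ℂ) ∂μT = 0 := by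
  have hneg : ∀ k : ℕ, 1 ≤ k →
      ∫ x, fourier (-(k : ℤ)) x * ((normSq ((φ : AddCircle (2 * π) → ℂ) x) : ℝ) : ℂ) ∂μT = 0 := by
    intro k hk
    have h0 := horth k hk
    rw [L2.inner_def] at h0
    rw [← h0]
    refine integral_congr_ae ?_
    filter_upwards [SOp_pow_coe k φ] with x hx
    rw [RCLike.inner_apply, hx, map_mul, fourier_neg, normSq_eq_conj_mul_self]
    ring
  intro n hn
  rcases lt_or_gt_of_ne hn with h | h
  · have hk : n = -(((-n).toNat : ℕ) : ℤ) := by omega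
    rw [hk]
    exact hneg _ (by omega)
  · obtain ⟨m, rfl⟩ : ∃ m : ℕ, n = (m : ℤ) := ⟨n.toNat, by omega⟩
    have hcon := hneg m (by exact_mod_cast h)
    have heq : ∫ x, fourier (m : ℤ) x * ((normSq ((φ : AddCircle (2 * π) → ℂ) x) : ℝ) : ℂ) ∂μT
        = conj (∫ x, fourier (-(m : ℤ)) x
            * ((normSq ((φ : AddCircle (2 * π) → ℂ) x) : ℝ) : ℂ) ∂μT) := by
      rw [← integral_conj]
      refine integral_congr_ae (Filter.Eventually.of_forall fun x => ?_)
      dsimp only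
      rw [map_mul, fourier_neg, Complex.conj_conj, Complex.conj_ofReal]
    rw [heq, hcon, map_zero]

end NormSq

section NoWandering

lemma integral_fourier (n : ℤ) :
    ∫ x, fourier n x ∂μT = if n = 0 then 1 else 0 := by
  by_cases hn : n = 0
  · subst hn
    simp only [fourier_zero, if_pos rfl]
    simp [integral_const]
  · rw [if_neg hn]
    have h0 : (inner (𝕜 := ℂ) (fourierLp (T := 2 * π) 2 (-n)) (fourierLp 2 0)) = 0 :=
      orthonormal_fourier.2 (show -n ≠ 0 by omega)
    rw [L2.inner_def] at h0
    rw [← h0]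
    refine integral_congr_ae ?_
    filter_upwards [coeFn_fourierLp (T := 2 * π) 2 (-n), coeFn_fourierLp (T := 2 * π) 2 0]
      with x h1 h2
    rw [RCLike.inner_apply, h1, h2, fourier_neg, Complex.conj_conj, fourier_zero, one_mul]

set_option maxHeartbeats 1000000 in
lemma no_wandering (φ : L2) (hφ0 : φ ≠ 0)
    (E : Set (AddCircle (2 * π))) (hEmeas : MeasurableSet E) (hE0 : μT E ≠ 0)
    (hφE : ∀ᵐ x ∂μT, x ∈ E → (φ : AddCircle (2 * π) → ℂ) x = 0)
    (horth : ∀ k : ℕ, 1 ≤ k → (inner ℂ ((SOp ^ k) φ) φ : ℂ) = 0) : False := by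
  set W : AddCircle (2 * π) → ℝ := fun x => normSq ((φ : AddCircle (2 * π) → ℂ) x) with hW
  have hWnn : ∀ x, 0 ≤ W x := fun x => normSq_nonneg _
  have hWint : Integrable W μT := integrable_normSq φ
  set c : ℝ := ‖φ‖ ^ 2 with hc
  have hcW : ∫ x, W x ∂μT = c := integral_normSq φ
  have hcpos : 0 < c := pow_pos (norm_pos_iff.mpr hφ0) 2
  set Wc : AddCircle (2 * π) → ℂ := fun x => ((W x : ℝ) : ℂ) - ((c : ℝ) : ℂ) with hWc
  have hWϚint : Integrable (fun x => ((W x : ℝ) : ℂ)) μT := hWint.ofReal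
  have hWcint : Integrable Wc μT := hWϚint.sub (integrable_const _)
  have hmul : ∀ h : C(AddCircle (2 * π), ℂ), Integrable (fun x => h x * Wc x) μT := fun h =>
    hWcint.bdd_mul h.continuous.aestronglyMeasurable (Filter.Eventually.of_forall fun x => h.norm_coe_le_norm x)
  -- the linear functional
  set Φ : C(AddCircle (2 * π), ℂ) →ₗ[ℂ] ℂ :=
    { toFun := fun h => ∫ x, h x * Wc x ∂μT
      map_add' := fun h1 h2 => by
        rw [← integral_add (hmul h1) (hmul h2)]
        refine integral_congr_ae (Filter.Eventually.of_forall fun x => ?_)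
        simp only [ContinuousMap.coe_add, Pi.add_apply]
        ring
      map_smul' := fun m h => by
        simp only [RingHom.id_apply, smul_eq_mul]
        rw [← integral_const_mul]
        refine integral_congr_ae (Filter.Eventually.of_forall fun x => ?_)
        simp only [ContinuousMap.coe_smul, Pi.smul_apply, smul_eq_mul]
        ring } with hΦ
  have hΦbound : ∀ h : C(AddCircle (2 * π), ℂ), ‖Φ h‖ ≤ (∫ x, ‖Wc x‖ ∂μT) * ‖h‖ := by
    intro h
    have h1 : ‖Φ h‖ ≤ ∫ x, ‖h x * Wc x‖ ∂μT := norm_integral_le_integral_norm _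
    refine h1.trans ?_
    have h2 : ∫ x, ‖h x * Wc x‖ ∂μT ≤ ∫ x, ‖h‖ * ‖Wc x‖ ∂μT := by
      refine integral_mono (hmul h).norm (hWcint.norm.const_mul _) fun x => ?_
      rw [norm_mul]
      exact mul_le_mul_of_nonneg_right (h.norm_coe_le_norm x) (norm_nonneg _)
    refine h2.trans (le_of_eq ?_)
    rw [integral_const_mul]
    ring
  set ΦC : C(AddCircle (2 * π), ℂ) →L[ℂ] ℂ := Φ.mkContinuous _ hΦbound with hΦC
  have hΦCapp : ∀ h : C(AddCircle (2 * π), ℂ), ΦC h = ∫ x, h x * Wc x ∂μT := fun h => rfl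
  -- ΦC vanishes on the trigonometric monomials
  have hΦfourier : ∀ n : ℤ, ΦC (fourier n) = 0 := by
    intro n
    have hint1 : Integrable (fun x => fourier n x * ((W x : ℝ) : ℂ)) μT :=
      hWϚint.bdd_mul (fourier n).continuous.aestronglyMeasurable
        (Filter.Eventually.of_forall fun x => le_of_eq (norm_fourier_apply n x))
    have hint2 : Integrable (fun x => ((c : ℝ) : ℂ) * fourier n x) μT :=
      (integrable_of_bound _ (fourier n).continuous.aestronglyMeasurable 1
        (fun x => le_of_eq (norm_fourier_apply n x))).const_mul _
    have hsplit : ΦC (fourier n) = (∫ x, fourier n x * ((W x : ℝ) : ℂ) ∂μT)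
        - ((c : ℝ) : ℂ) * ∫ x, fourier n x ∂μT := by
      rw [hΦCapp, ← integral_const_mul, ← integral_sub hint1 hint2]
      refine integral_congr_ae (Filter.Eventually.of_forall fun x => ?_)
      simp only [hWc]
      ring
    rw [hsplit, integral_fourier]
    by_cases hn : n = 0
    · subst hn
      have h1 : ∫ x, fourier (0 : ℤ) x * ((W x : ℝ) : ℂ) ∂μT = ((c : ℝ) : ℂ) := by
        have h2 : ∫ x, fourier (0 : ℤ) x * ((W x : ℝ) : ℂ) ∂μT
            = ∫ x, ((W x : ℝ) : ℂ) ∂μT := by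
          refine integral_congr_ae (Filter.Eventually.of_forall fun x => ?_)
          dsimp only
          rw [fourier_zero, one_mul]
        have h6 : ∫ x, ((W x : ℝ) : ℂ) ∂μT = ((∫ x, W x ∂μT : ℝ) : ℂ) := integral_ofReal
        rw [h2, h6, hcW]
      rw [h1, if_pos rfl]
      ring
    · rw [integral_fourier_mul_normSq_eq_zero φ horth n hn, if_neg hn]
      ring
  -- density of trigonometric polynomials
  have hΦzero : ∀ h : C(AddCircle (2 * π), ℂ), ΦC h = 0 := by
    have hdense : Dense ((Submodule.span ℂ (Set.range (@fourier (2 * π))) :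
        Submodule ℂ C(AddCircle (2 * π), ℂ)) : Set C(AddCircle (2 * π), ℂ)) := by
      have htop := span_fourier_closure_eq_top (T := 2 * π)
      rw [dense_iff_closure_eq, ← Submodule.topologicalClosure_coe, htop]
      rfl
    have heq : Set.EqOn (⇑ΦC) (fun _ => (0 : ℂ))
        ((Submodule.span ℂ (Set.range (@fourier (2 * π))) :
          Submodule ℂ C(AddCircle (2 * π), ℂ)) : Set C(AddCircle (2 * π), ℂ)) := by
      intro t ht
      exact Submodule.span_induction (p := fun t _ => ΦC t = 0)
        (fun x hx => by obtain ⟨n, rfl⟩ := hx; exact hΦfourier n)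
        (map_zero ΦC)
        (fun x y _ _ hx hy => by rw [map_add, hx, hy, add_zero])
        (fun a x _ hx => by rw [_root_.map_smul, hx, smul_zero])
        ht
    have hfin := Continuous.ext_on hdense ΦC.continuous continuous_const heq
    exact fun h => congrFun hfin h
  -- the key identity
  have hkey : ∀ h : C(AddCircle (2 * π), ℂ),
      ∫ x, h x * ((W x : ℝ) : ℂ) ∂μT = ((c : ℝ) : ℂ) * ∫ x, h x ∂μT := by
    intro h
    have h0 := hΦzero h
    rw [hΦCapp] at h0
    have hint1 : Integrable (fun x => h x * ((W x : ℝ) : ℂ)) μT :=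
      hWϚint.bdd_mul h.continuous.aestronglyMeasurable (Filter.Eventually.of_forall fun x => h.norm_coe_le_norm x)
    have hint2 : Integrable (fun x => ((c : ℝ) : ℂ) * h x) μT :=
      ((integrable_of_bound _ h.continuous.aestronglyMeasurable ‖h‖
        (fun x => h.norm_coe_le_norm x))).const_mul _
    have hsplit : (∫ x, h x * Wc x ∂μT) = (∫ x, h x * ((W x : ℝ) : ℂ) ∂μT)
        - ((c : ℝ) : ℂ) * ∫ x, h x ∂μT := by
      rw [← integral_const_mul, ← integral_sub hint1 hint2]
      refine integral_congr_ae (Filter.Eventually.of_forall fun x => ?_)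
      simp only [hWc]
      ring
    rw [h0] at hsplit
    exact sub_eq_zero.mp hsplit.symm
  -- a compact subset of `E` of positive measure
  obtain ⟨K, hKE, hKcomp, hKlt⟩ := hEmeas.exists_isCompact_lt_add (measure_ne_top μT E) hE0
  have hK0 : μT K ≠ 0 := by
    intro h0
    rw [h0, zero_add] at hKlt
    exact absurd hKlt (lt_irrefl _)
  have hKmeas : MeasurableSet K := hKcomp.isClosed.measurableSet
  set cK : ℝ := (μT K).toReal with hcK
  have hcKpos : 0 < cK := ENNReal.toReal_pos hK0 (measure_ne_top _ _)
  -- absolute continuity of the integral of `W`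
  have hlfin : ∫⁻ x, ENNReal.ofReal (W x) ∂μT ≠ ⊤ := by
    have h1 : ∫⁻ x, ENNReal.ofReal (W x) ∂μT = ∫⁻ x, ‖W x‖ₑ ∂μT :=
      lintegral_congr fun x => (Real.enorm_eq_ofReal (hWnn x)).symm
    rw [h1]
    exact hWint.2.ne
  obtain ⟨δ, hδpos, hδ⟩ := exists_pos_setLIntegral_lt_of_measure_lt (μ := μT) hlfin
    (ε := ENNReal.ofReal (c * cK)) (ENNReal.ofReal_pos.mpr (by positivity)).ne'
  obtain ⟨U, hKU, hUopen, hUlt⟩ := Set.exists_isOpen_lt_of_lt K (μT K + δ)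
    (ENNReal.lt_add_right (measure_ne_top _ _) hδpos.ne')
  have hdiffmeas : MeasurableSet (U \ K) := hUopen.measurableSet.diff hKmeas
  have hdiffμ : μT (U \ K) < δ :=
    measure_diff_lt_of_lt_add hKmeas.nullMeasurableSet hKU (measure_ne_top _ _) hUlt
  -- Urysohn function
  obtain ⟨h, hh1, hh0, -, hh01⟩ := exists_continuous_one_zero_of_isCompact hKcomp
    hUopen.isClosed_compl (Set.disjoint_left.mpr fun x hxK hxU => hxU (hKU hxK))
  have habs : ∀ x, ‖h x‖ ≤ 1 := fun x => by
    rw [Real.norm_eq_abs, abs_le]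
    exact ⟨by linarith [(hh01 x).1], (hh01 x).2⟩
  set hC : C(AddCircle (2 * π), ℂ) := ContinuousMap.mk (fun x => ((h x : ℝ) : ℂ))
    (Complex.continuous_ofReal.comp h.continuous) with hhC
  have hid := hkey hC
  have hL : ∫ x, hC x * ((W x : ℝ) : ℂ) ∂μT = ((∫ x, h x * W x ∂μT : ℝ) : ℂ) := by
    have h1 : ∫ x, hC x * ((W x : ℝ) : ℂ) ∂μT = ∫ x, ((h x * W x : ℝ) : ℂ) ∂μT := by
      refine integral_congr_ae (Filter.Eventually.of_forall fun x => ?_)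
      push_cast
      rfl
    rw [h1]
    exact integral_ofReal
  have hR : ∫ x, hC x ∂μT = ((∫ x, h x ∂μT : ℝ) : ℂ) := integral_ofReal
  have hreal : ∫ x, h x * W x ∂μT = c * ∫ x, h x ∂μT := by
    rw [hL, hR] at hid
    exact_mod_cast hid
  have hhint : Integrable (⇑h) μT :=
    integrable_of_bound _ h.continuous.aestronglyMeasurable 1 habs
  have hhWint : Integrable (fun x => h x * W x) μT :=
    hWint.bdd_mul h.continuous.aestronglyMeasurable (Filter.Eventually.of_forall habs)
  -- lower bound
  have hlow : cK ≤ ∫ x, h x ∂μT := by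
    have hind : Integrable (K.indicator (fun _ => (1 : ℝ))) μT :=
      (integrable_const 1).indicator hKmeas
    have h1 : ∫ x, K.indicator (fun _ => (1 : ℝ)) x ∂μT = cK := by
      rw [integral_indicator hKmeas, setIntegral_const, smul_eq_mul, mul_one]
      rfl
    rw [← h1]
    refine integral_mono hind hhint fun x => ?_
    by_cases hx : x ∈ K
    · rw [Set.indicator_of_mem hx]
      exact le_of_eq (hh1 hx).symm
    · rw [Set.indicator_of_notMem hx]
      exact (hh01 x).1
  -- upper bound
  have hup : ∫ x, h x * W x ∂μT ≤ ∫ x, (U \ K).indicator W x ∂μT := by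
    refine integral_mono_ae hhWint (hWint.indicator hdiffmeas) ?_
    filter_upwards [hφE] with x hx
    by_cases hxK : x ∈ K
    · have hWx : W x = 0 := by
        simp only [hW]
        rw [hx (hKE hxK), normSq_zero]
      rw [hWx, mul_zero]
      exact Set.indicator_nonneg (fun y _ => hWnn y) x
    · by_cases hxU : x ∈ U
      · rw [Set.indicator_of_mem (show x ∈ U \ K from ⟨hxU, hxK⟩)]
        nlinarith [hWnn x, (hh01 x).1, (hh01 x).2]
      · have hhx : h x = 0 := hh0 hxU
        rw [hhx, zero_mul]
        exact Set.indicator_nonneg (fun y _ => hWnn y) x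
  have hup2 : ∫ x, (U \ K).indicator W x ∂μT < c * cK := by
    rw [integral_indicator hdiffmeas]
    have h1 : ∫ x in U \ K, W x ∂μT = (∫⁻ x in U \ K, ENNReal.ofReal (W x) ∂μT).toReal :=
      integral_eq_lintegral_of_nonneg_ae (Filter.Eventually.of_forall hWnn)
        hWint.aestronglyMeasurable.restrict
    rw [h1]
    have h2 := hδ (U \ K) hdiffμ
    have h3 : (∫⁻ x in U \ K, ENNReal.ofReal (W x) ∂μT).toReal
        < (ENNReal.ofReal (c * cK)).toReal :=
      (ENNReal.toReal_lt_toReal (ne_top_of_lt h2) ENNReal.ofReal_ne_top).mpr h2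
    rwa [ENNReal.toReal_ofReal (by positivity)] at h3
  have hfin : c * cK ≤ ∫ x, h x * W x ∂μT := by
    rw [hreal]
    exact mul_le_mul_of_nonneg_left hlow hcpos.le
  linarith [hup.trans_lt hup2]

end NoWandering

section HardyUnique

set_option maxHeartbeats 1000000 in
theorem hardy_ae_ne_zero (g : L2) (hg : ∀ n : ℤ, n < 0 → fourierBasis.repr g n = 0)
    (hne : g ≠ 0) : ∀ᵐ x ∂μT, (g : AddCircle (2 * π) → ℂ) x ≠ 0 := by
  by_contra hcon
  have hsm := Lp.aestronglyMeasurable g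
  set g' := hsm.mk (g : AddCircle (2 * π) → ℂ) with hg'
  have hgg' : (g : AddCircle (2 * π) → ℂ) =ᵐ[μT] g' := hsm.ae_eq_mk
  set E : Set (AddCircle (2 * π)) := {x | g' x = 0} with hE
  have hEmeas : MeasurableSet E :=
    hsm.stronglyMeasurable_mk.measurable (measurableSet_singleton 0)
  have hE0 : μT E ≠ 0 := by
    intro h0
    apply hcon
    have h1 : ∀ᵐ x ∂μT, g' x ≠ 0 := by
      rw [ae_iff]
      convert h0 using 2
      ext x
      simp [hE]
    filter_upwards [h1, hgg'] with x h2 h3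
    rw [h3]; exact h2
  -- the invariant subspace chain
  set u : ℕ → L2 := fun k => (SOp ^ k) g with hu
  have hu0 : u 0 = g := by simp [hu]
  have husucc : ∀ k, u (k + 1) = SOp (u k) := fun k => by
    simp only [hu]
    rw [pow_succ']
    rfl
  set M : Submodule ℂ L2 := (Submodule.span ℂ (Set.range u)).topologicalClosure with hM
  set M1 : Submodule ℂ L2 :=
    (Submodule.span ℂ (Set.range fun k => u (k + 1))).topologicalClosure with hM1
  have hM1M : M1 ≤ M := Submodule.topologicalClosure_mono (Submodule.span_mono
    (by rintro _ ⟨k, rfl⟩; exact ⟨k + 1, rfl⟩))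
  have hgM : g ∈ M := by
    rw [← hu0]
    exact Submodule.le_topologicalClosure _ (Submodule.subset_span ⟨0, rfl⟩)
  have huM : ∀ k, u k ∈ M := fun k =>
    Submodule.le_topologicalClosure _ (Submodule.subset_span ⟨k, rfl⟩)
  have hSM : ∀ h ∈ M, SOp h ∈ M1 := by
    intro h hh
    have hmap : SOp '' ((Submodule.span ℂ (Set.range u) : Submodule ℂ L2) : Set L2)
        ⊆ ((Submodule.span ℂ (Set.range fun k => u (k + 1)) : Submodule ℂ L2) : Set L2) := by
      rintro y ⟨x, hx, rfl⟩
      have hle : Submodule.map (SOp : L2 →ₗ[ℂ] L2) (Submodule.span ℂ (Set.range u))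
          ≤ Submodule.span ℂ (Set.range fun k => u (k + 1)) := by
        rw [Submodule.map_span]
        refine Submodule.span_le.2 ?_
        rintro _ ⟨_, ⟨k, rfl⟩, rfl⟩
        exact Submodule.subset_span ⟨k, by simpa using husucc k⟩
      exact hle ⟨x, hx, rfl⟩
    have hh' : h ∈ closure ((Submodule.span ℂ (Set.range u) : Submodule ℂ L2) : Set L2) := by
      rw [← Submodule.topologicalClosure_coe]
      exact hh
    have h2 : SOp h ∈ closure (SOp ''
        ((Submodule.span ℂ (Set.range u) : Submodule ℂ L2) : Set L2)) :=
      image_closure_subset_closure_image SOp.continuous ⟨h, hh', rfl⟩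
    show SOp h ∈ M1
    rw [hM1, ← SetLike.mem_coe, Submodule.topologicalClosure_coe]
    exact closure_mono hmap h2
  -- coefficients of elements of M vanish below 0
  have huH : ∀ k, ∀ m : ℤ, m < 0 → fourierBasis.repr (u k) m = 0 := by
    intro k
    induction k with
    | zero => rw [hu0]; exact hg
    | succ k ih =>
      intro m hm
      rw [husucc k, repr_SOp]
      exact ih (m - 1) (by omega)
  have hMH : M ≤ Hge 0 := by
    refine Submodule.topologicalClosure_minimal _ ?_ (hge_isClosed 0)
    refine Submodule.span_le.2 ?_
    rintro _ ⟨k, rfl⟩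
    exact fun m hm => huH k m hm
  -- M1 is a proper subspace of M
  have hM1ne : M1 ≠ M := by
    intro heq
    have hclaim : ∀ N : ℕ, M ≤ Hge N := by
      intro N
      induction N with
      | zero => simpa using hMH
      | succ N ih =>
        rw [← heq]
        refine Submodule.topologicalClosure_minimal _ ?_ (hge_isClosed _)
        refine Submodule.span_le.2 ?_
        rintro _ ⟨k, rfl⟩
        intro m hm
        show fourierBasis.repr (u (k + 1)) m = 0
        rw [husucc k, repr_SOp]
        exact ih (huM k) (m - 1) (by push_cast at hm ⊢; omega)
    refine hne (eq_zero_of_repr_eq_zero fun m => ?_)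
    exact hclaim (m.toNat + 1) hgM m (by push_cast; omega)
  -- the wandering vector
  haveI : CompleteSpace M1 := (Submodule.isClosed_topologicalClosure _).completeSpace_coe
  obtain ⟨ψ, hψM, hψM1⟩ := SetLike.exists_of_lt (lt_of_le_of_ne hM1M hM1ne)
  set φ : L2 := ψ - (M1.orthogonalProjectionOnto ψ : L2) with hφ
  have hφ0 : φ ≠ 0 := by
    intro h0
    apply hψM1
    rw [hφ, sub_eq_zero] at h0
    rw [h0]
    exact (M1.orthogonalProjectionOnto ψ).2
  have hφM : φ ∈ M := Submodule.sub_mem M hψM (hM1M (M1.orthogonalProjectionOnto ψ).2)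
  have hφperp : φ ∈ M1ᗮ := Submodule.sub_starProjection_mem_orthogonal (K := M1) ψ
  have hSkφ : ∀ k : ℕ, 1 ≤ k → (SOp ^ k) φ ∈ M1 := by
    intro k hk
    induction k with
    | zero => omega
    | succ k ih =>
      rcases Nat.eq_zero_or_pos k with rfl | hpos
      · simpa [pow_one] using hSM φ hφM
      · have h1 : (SOp ^ (k + 1)) φ = SOp ((SOp ^ k) φ) := by rw [pow_succ']; rfl
        rw [h1]
        exact hSM _ (hM1M (ih hpos))
  have horth : ∀ k : ℕ, 1 ≤ k → (inner ℂ ((SOp ^ k) φ) φ : ℂ) = 0 := fun k hk =>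
    (Submodule.mem_orthogonal M1 φ).1 hφperp _ (hSkφ k hk)
  -- elements of M vanish a.e. on E
  have hχmem : MemLp (E.indicator (fun _ => (1 : ℂ))) ⊤ μT := by
    refine memLp_top_of_bound (aestronglyMeasurable_const.indicator hEmeas) 1
      (Filter.Eventually.of_forall fun x => ?_)
    by_cases hx : x ∈ E
    · rw [Set.indicator_of_mem hx]; simp
    · rw [Set.indicator_of_notMem hx]; simp
  set χ : Linf := hχmem.toLp _ with hχ
  have hχcoe : (χ : AddCircle (2 * π) → ℂ) =ᵐ[μT] E.indicator (fun _ => 1) :=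
    MemLp.coeFn_toLp _
  have hkerS : ∀ h : L2, Mult χ h = 0 → Mult χ (SOp h) = 0 := by
    intro h hh
    have h1 : (fun x => (χ : AddCircle (2 * π) → ℂ) x * (h : AddCircle (2 * π) → ℂ) x)
        =ᵐ[μT] 0 := by
      refine (Mult_coe χ h).symm.trans ?_
      rw [hh]
      exact Lp.coeFn_zero ℂ 2 μT
    refine Lp.ext (((Mult_coe χ (SOp h)).trans ?_).trans (Lp.coeFn_zero ℂ 2 μT).symm)
    filter_upwards [SOp_coe h, h1] with x hx1 hx2
    show (χ : AddCircle (2 * π) → ℂ) x * (SOp h : AddCircle (2 * π) → ℂ) x = _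
    rw [hx1]
    have h3 : (χ : AddCircle (2 * π) → ℂ) x * (fourier 1 x * (h : AddCircle (2 * π) → ℂ) x)
        = fourier 1 x * ((χ : AddCircle (2 * π) → ℂ) x * (h : AddCircle (2 * π) → ℂ) x) := by
      ring
    rw [h3]
    have h4 : (χ : AddCircle (2 * π) → ℂ) x * (h : AddCircle (2 * π) → ℂ) x = 0 := hx2
    rw [h4, mul_zero]
    rfl
  have hkerg : Mult χ g = 0 := by
    refine Lp.ext (((Mult_coe χ g).trans ?_).trans (Lp.coeFn_zero ℂ 2 μT).symm)
    filter_upwards [hgg', hχcoe] with x hx1 hx2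
    show (χ : AddCircle (2 * π) → ℂ) x * (g : AddCircle (2 * π) → ℂ) x = _
    by_cases hx : x ∈ E
    · rw [hx1]
      have : g' x = 0 := hx
      rw [this, mul_zero]
      rfl
    · rw [hx2, Set.indicator_of_notMem hx, zero_mul]
      rfl
  have hker : ∀ k, Mult χ (u k) = 0 := by
    intro k
    induction k with
    | zero => rw [hu0]; exact hkerg
    | succ k ih => rw [husucc]; exact hkerS _ ih
  have hMker : M ≤ LinearMap.ker (Mult χ : L2 →ₗ[ℂ] L2) := by
    refine Submodule.topologicalClosure_minimal _ ?_ (ContinuousLinearMap.isClosed_ker _)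
    refine Submodule.span_le.2 ?_
    rintro _ ⟨k, rfl⟩
    exact LinearMap.mem_ker.2 (hker k)
  have hφker : Mult χ φ = 0 := LinearMap.mem_ker.1 (hMker hφM)
  have hφE : ∀ᵐ x ∂μT, x ∈ E → (φ : AddCircle (2 * π) → ℂ) x = 0 := by
    have h1 : (fun x => (χ : AddCircle (2 * π) → ℂ) x * (φ : AddCircle (2 * π) → ℂ) x)
        =ᵐ[μT] 0 := by
      refine (Mult_coe χ φ).symm.trans ?_
      rw [hφker]
      exact Lp.coeFn_zero ℂ 2 μT
    filter_upwards [h1, hχcoe] with x hx1 hx2 hxE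
    have h2 : (χ : AddCircle (2 * π) → ℂ) x = 1 := by
      rw [hx2, Set.indicator_of_mem hxE]
    have h3 : (χ : AddCircle (2 * π) → ℂ) x * (φ : AddCircle (2 * π) → ℂ) x = 0 := hx1
    rw [h2, one_mul] at h3
    exact h3
  exact no_wandering φ hφ0 E hEmeas hE0 hφE horth

end HardyUnique

section Assembly

lemma fourierCoeff_conj (v : AddCircle (2 * π) → ℂ) (n : ℤ) :
    fourierCoeff (fun x => conj (v x)) n = conj (fourierCoeff v (-n)) := by
  unfold fourierCoeff
  rw [← integral_conj]
  refine integral_congr_ae (Filter.Eventually.of_forall fun x => ?_)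
  dsimp only
  simp only [smul_eq_mul, neg_neg]
  rw [map_mul, ← fourier_neg]

lemma repr_conjLp (v : L2) (n : ℤ) :
    fourierBasis.repr (conjLp v) n = conj (fourierBasis.repr v (-n)) := by
  rw [repr_eq_fourierCoeff, repr_eq_fourierCoeff,
    fourierCoeff_congr_ae' (conjLp_coe v), fourierCoeff_conj]

lemma pairedS_coe (a b : Linf) (f : L2) :
    (pairedS a b f : AddCircle (2 * π) → ℂ) =ᵐ[μT]
      fun x => a x * (Pplus f : AddCircle (2 * π) → ℂ) x
        + b x * (Pminus f : AddCircle (2 * π) → ℂ) x := by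
  have h0 : pairedS a b f = Mult a (Pplus f) + Mult b (Pminus f) := rfl
  rw [h0]
  filter_upwards [Lp.coeFn_add (Mult a (Pplus f)) (Mult b (Pminus f)),
    Mult_coe a (Pplus f), Mult_coe b (Pminus f)] with x h1 h2 h3
  rw [h1, Pi.add_apply, h2, h3]

lemma pairedS_eq_zero_iff (a b : Linf) (f : L2) :
    pairedS a b f = 0 ↔ ∀ᵐ x ∂μT,
      a x * (Pplus f : AddCircle (2 * π) → ℂ) x
        + b x * (Pminus f : AddCircle (2 * π) → ℂ) x = 0 := by
  constructor
  · intro h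
    have h1 : (fun x => a x * (Pplus f : AddCircle (2 * π) → ℂ) x
        + b x * (Pminus f : AddCircle (2 * π) → ℂ) x) =ᵐ[μT] 0 := by
      refine (pairedS_coe a b f).symm.trans ?_
      rw [h]
      exact Lp.coeFn_zero ℂ 2 μT
    filter_upwards [h1] with x hx
    exact hx
  · intro h
    refine Lp.ext (((pairedS_coe a b f).trans ?_).trans (Lp.coeFn_zero ℂ 2 μT).symm)
    filter_upwards [h] with x hx
    exact hx

lemma hincl (a b ta tb : Linf) (ha : ∀ᵐ x ∂μT, (a : AddCircle (2 * π) → ℂ) x ≠ 0)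
    (hkey : ∀ᵐ x ∂μT, (a : AddCircle (2 * π) → ℂ) x * tb x = ta x * b x)
    (g : L2) (hgker : pairedS a b g = 0) : pairedS ta tb g = 0 := by
  have h1 := (pairedS_eq_zero_iff a b g).1 hgker
  refine (pairedS_eq_zero_iff ta tb g).2 ?_
  filter_upwards [h1, ha, hkey] with x hx1 hx2 hx3
  have h6 : (a : AddCircle (2 * π) → ℂ) x * (ta x * (Pplus g : AddCircle (2 * π) → ℂ) x
      + tb x * (Pminus g : AddCircle (2 * π) → ℂ) x) = 0 := by
    linear_combination (ta : AddCircle (2 * π) → ℂ) x * hx1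
      + (Pminus g : AddCircle (2 * π) → ℂ) x * hx3
  exact (mul_eq_zero.mp h6).resolve_left hx2

end Assembly

/-- If `{a,b}` and `{ã,b̃}` are nondegenerate and the paired kernels intersect
nontrivially, they coincide. -/
theorem statement15 (a b ta tb : Linf)
    (h1 : Nondegenerate a b) (h2 : Nondegenerate ta tb)
    (hx : ∃ f : L2, f ≠ 0 ∧ pairedS a b f = 0 ∧ pairedS ta tb f = 0) :
    LinearMap.ker (pairedS a b : L2 →ₗ[ℂ] L2) = LinearMap.ker (pairedS ta tb : L2 →ₗ[ℂ] L2) := by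
  obtain ⟨f, hf0, hfab, hftab⟩ := hx
  obtain ⟨ha, hb, -⟩ := h1
  obtain ⟨hta, htb, -⟩ := h2
  have hsum : Pplus f + Pminus f = f := by
    have : Pminus f = f - Pplus f := rfl
    rw [this]
    abel
  have hab := (pairedS_eq_zero_iff a b f).1 hfab
  have htab := (pairedS_eq_zero_iff ta tb f).1 hftab
  have hfp0 : Pplus f ≠ 0 := by
    intro h0
    apply hf0
    have hz : (Pplus f : AddCircle (2 * π) → ℂ) =ᵐ[μT] 0 := by
      rw [h0]; exact Lp.coeFn_zero ℂ 2 μT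
    have hm : Pminus f = 0 := by
      refine Lp.ext (Filter.EventuallyEq.trans ?_ (Lp.coeFn_zero ℂ 2 μT).symm)
      filter_upwards [hab, hb, hz] with x hx1 hx2 hx3
      have h4 : (b : AddCircle (2 * π) → ℂ) x * (Pminus f : AddCircle (2 * π) → ℂ) x = 0 := by
        have h5 : (0 : AddCircle (2 * π) → ℂ) x = 0 := rfl
        rw [hx3, h5, mul_zero, zero_add] at hx1
        exact hx1
      exact (mul_eq_zero.mp h4).resolve_left hx2
    rw [← hsum, h0, hm, add_zero]
  have hfpae : ∀ᵐ x ∂μT, (Pplus f : AddCircle (2 * π) → ℂ) x ≠ 0 := by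
    refine hardy_ae_ne_zero (Pplus f) ?_ hfp0
    intro n hn
    rw [repr_Pplus, if_neg (by omega)]
  have hkey : ∀ᵐ x ∂μT, (a : AddCircle (2 * π) → ℂ) x * tb x = ta x * b x := by
    filter_upwards [hab, htab, hfpae] with x hx1 hx2 hx3
    have h4 : ((a : AddCircle (2 * π) → ℂ) x * tb x - ta x * b x)
        * (Pplus f : AddCircle (2 * π) → ℂ) x = 0 := by
      linear_combination (tb : AddCircle (2 * π) → ℂ) x * hx1
        - (b : AddCircle (2 * π) → ℂ) x * hx2
    rcases mul_eq_zero.mp h4 with h5 | h5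
    · exact sub_eq_zero.mp h5
    · exact absurd h5 hx3
  ext g
  simp only [LinearMap.mem_ker]
  constructor
  · exact hincl a b ta tb ha hkey g
  · refine hincl ta tb a b hta ?_ g
    filter_upwards [hkey] with x hx
    linear_combination -hx

end
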